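/- Let ε ∈ [0,1], τ > 0, and let Q : S × A → ℝ satisfy ‖Q‖∞ ≤ 1/(1−γ). Let π be the ε-softmax policy of Q with temperature τ. Then ‖H_π(Q) − H(Q)‖∞ ≤ 2ε/(1−γ) + τ · log|A|. -/

import Mathlib

section

variable {S A : Type*} [Fintype S] [Fintype A] [Nonempty S] [Nonempty A]

/-- Sup norm on `S × A → ℝ`. -/
noncomputable def supNorm (Q : S × A → ℝ) : ℝ :=
  Finset.univ.sup' Finset.univ_nonempty fun y => |Q y|

/-- The Bellman optimality operator. -/
noncomputable def bellmanOpt (p : S × A → S → ℝ) (R : S × A → ℝ) (γ : ℝ)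
    (Q : S × A → ℝ) : S × A → ℝ :=
  fun sa => R sa + γ * ∑ s', p sa s' *
    (Finset.univ.sup' Finset.univ_nonempty fun a' => Q (s', a'))

/-- The policy Bellman operator `H_π`. -/
noncomputable def bellmanPol (p : S × A → S → ℝ) (R : S × A → ℝ) (γ : ℝ)
    (π : S → A → ℝ) (Q : S × A → ℝ) : S × A → ℝ :=
  fun sa => R sa + γ * ∑ s', ∑ a', p sa s' * π s' a' * Q (s', a')

/-- The `ε`-softmax policy of `Q` with temperature `τ`. -/
noncomputable def softmaxPolicy (Q : S × A → ℝ) (ε τ : ℝ) : S → A → ℝ :=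
  fun s a => ε / (Fintype.card A : ℝ) +
    (1 - ε) * Real.exp (Q (s, a) / τ) / ∑ a', Real.exp (Q (s, a') / τ)

set_option linter.unusedSectionVars false

lemma entropy_bound' (σ : A → ℝ) (hσ : ∀ a, 0 < σ a) (hs : ∑ a, σ a = 1) :
    -Real.log (Fintype.card A) ≤ ∑ a, σ a * Real.log (σ a) := by
  have hJ := (strictConcaveOn_log_Ioi.concaveOn).le_map_sum
    (t := Finset.univ) (w := σ) (p := fun a => (σ a)⁻¹)
    (fun a _ => (hσ a).le) hs (fun a _ => Set.mem_Ioi.2 (inv_pos.2 (hσ a)))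
  have h1 : ∑ a, σ a • (σ a)⁻¹ = (Fintype.card A : ℝ) := by
    simp only [smul_eq_mul]
    rw [Finset.sum_congr rfl (fun a _ => mul_inv_cancel₀ (hσ a).ne')]
    simp
  rw [h1] at hJ
  have h2 : ∑ a, σ a • Real.log (σ a)⁻¹ = -∑ a, σ a * Real.log (σ a) := by
    simp [Real.log_inv, mul_neg]
  rw [h2] at hJ
  linarith

/-- Softmax lower bound: `∑ σ_a q_a ≥ max q − τ log n`. -/
lemma softmax_lb (q : A → ℝ) (τ : ℝ) (hτ : 0 < τ) :
    (Finset.univ.sup' Finset.univ_nonempty q) - τ * Real.log (Fintype.card A) ≤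
      ∑ a, (Real.exp (q a / τ) / ∑ a', Real.exp (q a' / τ)) * q a := by
  set Z : ℝ := ∑ a', Real.exp (q a' / τ) with hZ
  have hZpos : 0 < Z := Finset.sum_pos (fun a _ => Real.exp_pos _) Finset.univ_nonempty
  set σ : A → ℝ := fun a => Real.exp (q a / τ) / Z with hσdef
  have hσpos : ∀ a, 0 < σ a := fun a => div_pos (Real.exp_pos _) hZpos
  have hσsum : ∑ a, σ a = 1 := by
    rw [hσdef]
    rw [← Finset.sum_div, ← hZ, div_self hZpos.ne']
  have hq : ∀ a, q a = τ * (Real.log (σ a) + Real.log Z) := by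
    intro a
    have : Real.log (σ a) = q a / τ - Real.log Z := by
      rw [hσdef]
      rw [Real.log_div (Real.exp_pos _).ne' hZpos.ne', Real.log_exp]
    rw [this]
    field_simp
    ring
  have hsum : ∑ a, σ a * q a
      = τ * (∑ a, σ a * Real.log (σ a)) + τ * Real.log Z := by
    calc ∑ a, σ a * q a = ∑ a, (τ * (σ a * Real.log (σ a)) + τ * Real.log Z * σ a) := by
          refine Finset.sum_congr rfl fun a _ => ?_
          rw [hq a]; ring
      _ = τ * (∑ a, σ a * Real.log (σ a)) + τ * Real.log Z := by
          rw [Finset.sum_add_distrib, ← Finset.mul_sum, ← Finset.mul_sum, hσsum, mul_one]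
  set M := Finset.univ.sup' Finset.univ_nonempty q with hM
  have hMZ : M ≤ τ * Real.log Z := by
    obtain ⟨a0, _, ha0⟩ := Finset.exists_mem_eq_sup' Finset.univ_nonempty q
    have h1 : Real.exp (M / τ) ≤ Z := by
      rw [hM, ha0, hZ]
      exact Finset.single_le_sum (f := fun a => Real.exp (q a / τ))
        (fun a _ => (Real.exp_pos _).le) (Finset.mem_univ a0)
    have := Real.log_le_log (Real.exp_pos _) h1
    rw [Real.log_exp] at this
    calc M = τ * (M / τ) := by field_simp
      _ ≤ τ * Real.log Z := by nlinarith
  have hent := entropy_bound' (A := A) σ hσpos hσsum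
  rw [hsum]
  nlinarith [hτ.le]

/-- Per-state bound on the gap between policy value and max. -/
lemma state_bound (q : A → ℝ) (ε τ γ : ℝ) (hε0 : 0 ≤ ε) (hε1 : ε ≤ 1) (hτ : 0 < τ)
    (hγ1 : γ < 1) (hq : ∀ a, |q a| ≤ 1 / (1 - γ)) :
    |(∑ a, (ε / (Fintype.card A : ℝ) +
        (1 - ε) * Real.exp (q a / τ) / ∑ a', Real.exp (q a' / τ)) * q a) -
      Finset.univ.sup' Finset.univ_nonempty q| ≤
      2 * ε / (1 - γ) + τ * Real.log (Fintype.card A) := by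
  have hγ : 0 < 1 - γ := by linarith
  set n : ℝ := (Fintype.card A : ℝ) with hn
  have hnpos : (0:ℝ) < n := by
    rw [hn]; exact_mod_cast Fintype.card_pos
  have hn1 : (1:ℝ) ≤ n := by
    rw [hn]; exact_mod_cast Fintype.card_pos
  have hlogn : 0 ≤ Real.log n := Real.log_nonneg hn1
  set Z : ℝ := ∑ a', Real.exp (q a' / τ) with hZ
  have hZpos : 0 < Z := Finset.sum_pos (fun a _ => Real.exp_pos _) Finset.univ_nonempty
  set M := Finset.univ.sup' Finset.univ_nonempty q with hM
  have hMle : M ≤ 1 / (1 - γ) := by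
    obtain ⟨a0, _, ha0⟩ := Finset.exists_mem_eq_sup' Finset.univ_nonempty q
    rw [hM, ha0]
    exact (abs_le.1 (hq a0)).2
  have hMge : ∀ a, q a ≤ M := fun a => Finset.le_sup' q (Finset.mem_univ a)
  set π : A → ℝ := fun a => ε / n + (1 - ε) * Real.exp (q a / τ) / Z with hπ
  have hπ0 : ∀ a, 0 ≤ π a := by
    intro a
    have : 0 ≤ (1 - ε) * Real.exp (q a / τ) / Z :=
      div_nonneg (mul_nonneg (by linarith) (Real.exp_pos _).le) hZpos.le
    have : 0 ≤ ε / n := div_nonneg hε0 hnpos.le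
    positivity
  have hπsum : ∑ a, π a = 1 := by
    rw [hπ]
    rw [Finset.sum_add_distrib]
    have h1 : ∑ _a : A, ε / n = ε := by
      rw [Finset.sum_const, Finset.card_univ, hn, nsmul_eq_mul]
      field_simp
    have h2 : ∑ a : A, (1 - ε) * Real.exp (q a / τ) / Z = 1 - ε := by
      rw [← Finset.sum_div]
      rw [← Finset.mul_sum, ← hZ, mul_div_assoc, div_self hZpos.ne', mul_one]
    rw [h1, h2]; ring
  -- split the sum
  have hsplit : ∑ a, π a * q a
      = (ε / n) * ∑ a, q a + (1 - ε) * ∑ a, (Real.exp (q a / τ) / Z) * q a := by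
    rw [hπ, Finset.mul_sum, Finset.mul_sum, ← Finset.sum_add_distrib]
    refine Finset.sum_congr rfl fun a _ => ?_
    ring
  -- upper bound: ∑ π q ≤ M
  have hub : ∑ a, π a * q a ≤ M := by
    calc ∑ a, π a * q a ≤ ∑ a, π a * M :=
          Finset.sum_le_sum fun a _ => mul_le_mul_of_nonneg_left (hMge a) (hπ0 a)
      _ = M := by rw [← Finset.sum_mul, hπsum, one_mul]
  -- lower bound
  have hsm := softmax_lb (A := A) q τ hτ
  have hmean : -(ε / (1 - γ)) ≤ (ε / n) * ∑ a, q a := by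
    have h1 : -(n * (1 / (1 - γ))) ≤ ∑ a, q a := by
      have : ∑ a, q a ≥ ∑ _a : A, -(1 / (1 - γ)) :=
        Finset.sum_le_sum fun a _ => (abs_le.1 (hq a)).1
      rw [Finset.sum_const, Finset.card_univ, nsmul_eq_mul] at this
      rw [hn]
      linarith [this]
    have h2 : (ε / n) * (-(n * (1 / (1 - γ)))) ≤ (ε / n) * ∑ a, q a :=
      mul_le_mul_of_nonneg_left h1 (div_nonneg hε0 hnpos.le)
    calc -(ε / (1 - γ)) = (ε / n) * (-(n * (1 / (1 - γ)))) := by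
          field_simp
      _ ≤ _ := h2
  have hlb : M - (2 * ε / (1 - γ) + τ * Real.log n) ≤ ∑ a, π a * q a := by
    rw [hsplit]
    have h3 : (1 - ε) * (M - τ * Real.log n) ≤
        (1 - ε) * ∑ a, (Real.exp (q a / τ) / Z) * q a := by
      apply mul_le_mul_of_nonneg_left _ (by linarith)
      rw [← hZ] at hsm
      exact hsm
    have hεM : ε * M ≤ ε / (1 - γ) := by
      have := mul_le_mul_of_nonneg_left hMle hε0
      calc ε * M ≤ ε * (1 / (1 - γ)) := this
        _ = ε / (1 - γ) := by ring
    have hεlog : ε * (τ * Real.log n) ≥ 0 :=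
      mul_nonneg hε0 (mul_nonneg hτ.le hlogn)
    have hexp : (1 - ε) * (M - τ * Real.log n)
        = M - ε * M - τ * Real.log n + ε * (τ * Real.log n) := by ring
    rw [hexp] at h3
    have h2e : 2 * ε / (1 - γ) = ε / (1 - γ) + ε / (1 - γ) := by ring
    rw [h2e]
    linarith
  rw [abs_sub_le_iff]
  have hb1 : 0 ≤ 2 * ε / (1 - γ) := by positivity
  have hb2 : 0 ≤ τ * Real.log n := mul_nonneg hτ.le hlogn
  exact ⟨by linarith, by linarith⟩

/-- `‖H_π(Q) − H(Q)‖∞ ≤ 2ε/(1−γ) + τ log|A|` for the ε-softmax policy `π` of `Q`. -/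
theorem stmt_15
    (p : S × A → S → ℝ)
    (hp0 : ∀ sa s', 0 ≤ p sa s')
    (hp1 : ∀ sa, ∑ s', p sa s' = 1)
    (R : S × A → ℝ) (hR : ∀ sa, |R sa| ≤ 1)
    (γ : ℝ) (hγ0 : 0 < γ) (hγ1 : γ < 1)
    (ε τ : ℝ) (hε0 : 0 ≤ ε) (hε1 : ε ≤ 1) (hτ : 0 < τ)
    (Q : S × A → ℝ) (hQ : supNorm Q ≤ 1 / (1 - γ)) :
    supNorm (bellmanPol p R γ (softmaxPolicy Q ε τ) Q - bellmanOpt p R γ Q) ≤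
      2 * ε / (1 - γ) + τ * Real.log (Fintype.card A) := by
  have hγ : 0 < 1 - γ := by linarith
  set B := 2 * ε / (1 - γ) + τ * Real.log (Fintype.card A) with hB
  have hlogn : 0 ≤ Real.log (Fintype.card A : ℝ) :=
    Real.log_nonneg (by exact_mod_cast Fintype.card_pos)
  have hBnn : 0 ≤ B := by
    have : 0 ≤ 2 * ε / (1 - γ) := by positivity
    have : 0 ≤ τ * Real.log (Fintype.card A : ℝ) := mul_nonneg hτ.le hlogn
    rw [hB]; linarith
  have hQb : ∀ y : S × A, |Q y| ≤ 1 / (1 - γ) := by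
    intro y
    exact le_trans (Finset.le_sup' (fun y => |Q y|) (Finset.mem_univ y)) hQ
  apply Finset.sup'_le
  intro sa _
  -- pointwise bound
  have key : ∀ s' : S,
      |(∑ a', softmaxPolicy Q ε τ s' a' * Q (s', a')) -
        Finset.univ.sup' Finset.univ_nonempty (fun a' => Q (s', a'))| ≤ B := by
    intro s'
    have := state_bound (A := A) (fun a' => Q (s', a')) ε τ γ hε0 hε1 hτ hγ1
      (fun a => hQb (s', a))
    simpa [softmaxPolicy] using this
  have heq : (bellmanPol p R γ (softmaxPolicy Q ε τ) Q - bellmanOpt p R γ Q) sa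
      = γ * ∑ s', p sa s' * ((∑ a', softmaxPolicy Q ε τ s' a' * Q (s', a')) -
          Finset.univ.sup' Finset.univ_nonempty (fun a' => Q (s', a'))) := by
    simp only [Pi.sub_apply, bellmanPol, bellmanOpt]
    have h1 : ∑ s', ∑ a', p sa s' * softmaxPolicy Q ε τ s' a' * Q (s', a')
        = ∑ s', p sa s' * ∑ a', softmaxPolicy Q ε τ s' a' * Q (s', a') := by
      refine Finset.sum_congr rfl fun s' _ => ?_
      rw [Finset.mul_sum]
      exact Finset.sum_congr rfl fun a' _ => by ring
    have h2 : ∑ s', p sa s' * ((∑ a', softmaxPolicy Q ε τ s' a' * Q (s', a')) -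
          Finset.univ.sup' Finset.univ_nonempty (fun a' => Q (s', a')))
        = (∑ s', p sa s' * ∑ a', softmaxPolicy Q ε τ s' a' * Q (s', a')) -
          ∑ s', p sa s' * Finset.univ.sup' Finset.univ_nonempty (fun a' => Q (s', a')) := by
      rw [← Finset.sum_sub_distrib]
      exact Finset.sum_congr rfl fun s' _ => mul_sub _ _ _
    rw [h1, h2]
    ring
  rw [heq, abs_mul, abs_of_pos hγ0]
  have h1 : |∑ s', p sa s' * ((∑ a', softmaxPolicy Q ε τ s' a' * Q (s', a')) -
      Finset.univ.sup' Finset.univ_nonempty (fun a' => Q (s', a')))| ≤ B := by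
    calc |∑ s', p sa s' * _| ≤ ∑ s', |p sa s' * ((∑ a', softmaxPolicy Q ε τ s' a' * Q (s', a')) -
          Finset.univ.sup' Finset.univ_nonempty (fun a' => Q (s', a')))| :=
          Finset.abs_sum_le_sum_abs _ _
      _ ≤ ∑ s', p sa s' * B := by
          refine Finset.sum_le_sum fun s' _ => ?_
          rw [abs_mul, abs_of_nonneg (hp0 sa s')]
          exact mul_le_mul_of_nonneg_left (key s') (hp0 sa s')
      _ = B := by rw [← Finset.sum_mul, hp1, one_mul]
  calc γ * |_| ≤ γ * B := mul_le_mul_of_nonneg_left h1 hγ0.le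
    _ ≤ 1 * B := mul_le_mul_of_nonneg_right (by linarith) hBnn
    _ = B := one_mul B

end
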